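/- Let f ∈ ℝ[z] be a polynomial such that f(z₀) > 0 for every real number z₀. Then there exists a polynomial p ∈ ℂ[z] with no real roots such that f(z) = p(z) · conj(p)(z), where conj(p) denotes the polynomial obtained from p by conjugating all coefficients. Conversely, for any p ∈ ℂ[z] with no real roots, p · conj(p) is everywhere positive on ℝ. -/

import Mathlib

open Polynomial

private lemma eval_map_conj' (p : Polynomial ℂ) (z : ℂ) :
    (p.map (starRingEnd ℂ)).eval z = starRingEnd ℂ (p.eval (starRingEnd ℂ z)) := by
  rw [eval_map, ← eval₂_hom, Complex.conj_conj]

private lemma eval_map_ofReal (f : Polynomial ℝ) (x : ℝ) :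
    (f.map (algebraMap ℝ ℂ)).eval (x : ℂ) = ((f.eval x : ℝ) : ℂ) := by
  rw [eval_map]
  exact eval₂_at_apply _ _

private lemma auxC (f : Polynomial ℝ) (hdeg : f.natDegree ≤ 0)
    (hpos : ∀ x : ℝ, 0 < f.eval x) :
    ∃ p : Polynomial ℂ, (∀ x : ℝ, p.eval (x : ℂ) ≠ 0) ∧
      f.map (algebraMap ℝ ℂ) = p * p.map (starRingEnd ℂ) := by
  have hf : f = C (f.coeff 0) := eq_C_of_natDegree_le_zero hdeg
  have h0 : 0 < f.coeff 0 := by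
    have := hpos 0
    rwa [hf, eval_C] at this
  refine ⟨C (Real.sqrt (f.coeff 0) : ℂ), ?_, ?_⟩
  · intro x
    simp only [eval_C, ne_eq, Complex.ofReal_eq_zero]
    exact (Real.sqrt_pos.mpr h0).ne'
  · conv_lhs => rw [hf]
    rw [Polynomial.map_C, Polynomial.map_C, Complex.conj_ofReal,
      ← C_mul, ← Complex.ofReal_mul, Real.mul_self_sqrt h0.le, Complex.coe_algebraMap]

private lemma aux : ∀ n : ℕ, ∀ f : Polynomial ℝ, f.natDegree ≤ n →
    (∀ x : ℝ, 0 < f.eval x) →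
    ∃ p : Polynomial ℂ, (∀ x : ℝ, p.eval (x : ℂ) ≠ 0) ∧
      f.map (algebraMap ℝ ℂ) = p * p.map (starRingEnd ℂ) := by
  intro n
  induction n with
  | zero => exact fun f hdeg hpos => auxC f hdeg hpos
  | succ n ih =>
    intro f hdeg hpos
    by_cases h0 : f.natDegree = 0
    · exact auxC f h0.le hpos
    · -- degree ≥ 1: find a complex root
      have hf0 : f ≠ 0 := fun h => by simpa [h] using hpos 0
      have hdpos : 0 < (f.map (algebraMap ℝ ℂ)).degree := by
        rw [degree_map_eq_of_injective (algebraMap ℝ ℂ).injective]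
        exact natDegree_pos_iff_degree_pos.mp (Nat.pos_of_ne_zero h0)
      obtain ⟨z, hz⟩ := Complex.exists_root hdpos
      have hzroot : aeval z f = 0 := by
        rwa [aeval_def, ← eval_map]
      have him : z.im ≠ 0 := by
        intro h
        have hx : (z.re : ℂ) = z := by
          exact Complex.ext (by simp) (by simp [h])
        have := hpos z.re
        have h2 : (f.map (algebraMap ℝ ℂ)).eval (z.re : ℂ) = 0 := by rw [hx]; exact hz
        rw [eval_map_ofReal] at h2
        rw [Complex.ofReal_eq_zero] at h2
        linarith [hpos z.re, h2]
      obtain ⟨g, hg⟩ := f.quadratic_dvd_of_aeval_eq_zero_im_ne_zero hzroot him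
      set Q : Polynomial ℝ := X ^ 2 - C (2 * z.re) * X + C (‖z‖ ^ 2) with hQdef
      have hnorm : ‖z‖ ^ 2 = z.re * z.re + z.im * z.im := by
        rw [Complex.sq_norm, Complex.normSq_apply]
      have hQpos : ∀ x : ℝ, 0 < Q.eval x := by
        intro x
        have : Q.eval x = (x - z.re) ^ 2 + z.im ^ 2 := by
          simp only [hQdef, eval_add, eval_sub, eval_mul, eval_pow, eval_X, eval_C, hnorm]
          ring
        rw [this]
        positivity
      have hgpos : ∀ x : ℝ, 0 < g.eval x := by
        intro x
        have h1 := hpos x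
        rw [hg, eval_mul] at h1
        nlinarith [hQpos x]
      have hg0 : g ≠ 0 := fun h => by simpa [h] using (hgpos 0)
      have hQdeg : Q.natDegree = 2 := by
        rw [hQdef]; compute_degree!
      have hgdeg : g.natDegree ≤ n := by
        have hQ0 : Q ≠ 0 := fun h => by simpa [h] using (hQpos 0)
        have := natDegree_mul hQ0 hg0
        rw [← hg, hQdeg] at this
        omega
      obtain ⟨p, hp, hpeq⟩ := ih g hgdeg hgpos
      refine ⟨(X - C z) * p, ?_, ?_⟩
      · intro x
        simp only [eval_mul, eval_sub, eval_X, eval_C, mul_ne_zero_iff]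
        refine ⟨sub_ne_zero.mpr fun h => him ?_, hp x⟩
        rw [← h]
        simp
      · have hQmap : Q.map (algebraMap ℝ ℂ) = (X - C ((starRingEnd ℂ) z)) * (X - C z) := by
          rw [hQdef]
          calc
            map (algebraMap ℝ ℂ) (X ^ 2 - C (2 * z.re) * X + C (‖z‖ ^ 2))
            _ = X ^ 2 - C (↑(2 * z.re) : ℂ) * X + C ((‖z‖ : ℂ) ^ 2) := by simp
            _ = (X - C ((starRingEnd ℂ) z)) * (X - C z) := by
              rw [← Complex.add_conj, map_add, ← Complex.mul_conj', map_mul]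
              ring
        rw [hg, Polynomial.map_mul, hQmap, hpeq, Polynomial.map_mul, Polynomial.map_sub,
          map_X, map_C]
        ring

/-- A real polynomial is strictly positive at every real point iff it is the
"norm" `p * conj p` of a complex polynomial `p` with no real roots. -/
theorem stmt_0 (f : Polynomial ℝ) :
    (∀ x : ℝ, 0 < f.eval x) ↔
      ∃ p : Polynomial ℂ, (∀ x : ℝ, p.eval (x : ℂ) ≠ 0) ∧
        f.map (algebraMap ℝ ℂ) = p * p.map (starRingEnd ℂ) := by
  constructor
  · intro hpos
    exact aux f.natDegree f le_rfl hpos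
  · rintro ⟨p, hp, heq⟩ x
    have h1 : ((f.eval x : ℝ) : ℂ) = p.eval (x : ℂ) * (p.map (starRingEnd ℂ)).eval (x : ℂ) := by
      rw [← eval_map_ofReal, heq, eval_mul]
    rw [eval_map_conj', Complex.conj_ofReal, Complex.mul_conj] at h1
    have h2 : f.eval x = Complex.normSq (p.eval (x : ℂ)) := by
      exact_mod_cast h1
    rw [h2]
    exact Complex.normSq_pos.mpr (hp x)
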